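/- Let x be a skew-adjoint endomorphism of (V, B). The following are equivalent: (a) there exist c ∈ k and a nonzero isotropic vector v ∈ V_H with x v = c v; (b) there is a direct sum decomposition V = ⊕_{i∈ℤ} V_i into subspaces, all but finitely many zero, such that B(V_i, V_j) = 0 whenever i + j ≠ 0, e ∈ V_0, V_i ≠ 0 for some i ≠ 0, and x V_i ⊆ ⊕_{j ≥ i} V_j for every i. -/

import Mathlib

/-- Auxiliary grading: degree 1 is `Sv`, degree `-1` is `Su`, degree 0 is `S0`,
all other degrees are `⊥`. -/
def gW {k V : Type*} [Field k] [AddCommGroup V] [Module k V]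
    (Sv Su S0 : Submodule k V) : ℤ → Submodule k V :=
  fun i => if i = 1 then Sv else if i = -1 then Su else if i = 0 then S0 else ⊥

theorem gW_one {k V : Type*} [Field k] [AddCommGroup V] [Module k V]
    (Sv Su S0 : Submodule k V) : gW Sv Su S0 1 = Sv := rfl

theorem gW_neg_one {k V : Type*} [Field k] [AddCommGroup V] [Module k V]
    (Sv Su S0 : Submodule k V) : gW Sv Su S0 (-1) = Su := rfl

theorem gW_zero {k V : Type*} [Field k] [AddCommGroup V] [Module k V]
    (Sv Su S0 : Submodule k V) : gW Sv Su S0 0 = S0 := rfl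

theorem gW_other {k V : Type*} [Field k] [AddCommGroup V] [Module k V]
    (Sv Su S0 : Submodule k V) {i : ℤ} (h1 : i ≠ 1) (h2 : i ≠ -1) (h0 : i ≠ 0) :
    gW Sv Su S0 i = ⊥ := by simp [gW, h1, h2, h0]

/-- Hilbert–Mumford for the orthogonal Gan–Gross–Prasad situation: a skew-adjoint
endomorphism `x` has a nonzero isotropic eigenvector in `V_H = (k·e)^⊥` iff there is a
nontrivial `ℤ`-grading of `V` which is isotropic (in the sense that `B(V_i, V_j) = 0`
for `i + j ≠ 0`), has `e` in degree `0`, and for which `x` raises degrees. -/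
theorem statement7 (k V : Type*) [Field k] [IsAlgClosed k] [CharZero k]
    [AddCommGroup V] [Module k V] [FiniteDimensional k V]
    (B : LinearMap.BilinForm k V)
    (hsymm : ∀ u v : V, B u v = B v u)
    (hnd : LinearMap.BilinForm.Nondegenerate B)
    (e : V) (he : B e e ≠ 0)
    (x : Module.End k V)
    (hskew : ∀ u v : V, B (x u) v = - B u (x v)) :
    (∃ (c : k) (v : V), v ∈ LinearMap.ker (B e) ∧ v ≠ 0 ∧ B v v = 0 ∧ x v = c • v) ↔
      (∃ W : ℤ → Submodule k V,
        DirectSum.IsInternal W ∧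
        {i : ℤ | W i ≠ ⊥}.Finite ∧
        (∀ i j : ℤ, i + j ≠ 0 → ∀ u ∈ W i, ∀ v ∈ W j, B u v = 0) ∧
        e ∈ W 0 ∧
        (∃ i : ℤ, i ≠ 0 ∧ W i ≠ ⊥) ∧
        (∀ i : ℤ, (W i).map (x : V →ₗ[k] V) ≤ ⨆ j ≥ i, W j)) := by
  constructor
  · rintro ⟨c, v, hev, hv0, hvv, hxv⟩
    have hev' : B e v = 0 := LinearMap.mem_ker.1 hev
    have hve : B v e = 0 := by rw [hsymm]; exact hev'
    -- construct a hyperbolic partner `u` of `v` which is orthogonal to `e`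
    obtain ⟨u₀, hu₀⟩ : ∃ u₀, B v u₀ ≠ 0 := by
      by_contra hcon
      push_neg at hcon
      exact hv0 (hnd.1 v hcon)
    set u₁ := (B v u₀)⁻¹ • u₀ with hu₁def
    have hvu₁ : B v u₁ = 1 := by
      simp only [hu₁def, map_smul, smul_eq_mul]
      field_simp
    set u₂ := u₁ - (B e u₁ / B e e) • e with hu₂def
    have hvu₂ : B v u₂ = 1 := by
      simp [hu₂def, map_sub, map_smul, hve, hvu₁]
    have heu₂ : B e u₂ = 0 := by
      simp only [hu₂def, map_sub, map_smul, smul_eq_mul]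
      field_simp
      ring
    set u := u₂ - (B u₂ u₂ / 2) • v with hudef
    have hvu : B v u = 1 := by simp [hudef, map_sub, map_smul, hvv, hvu₂]
    have huv : B u v = 1 := by rw [hsymm]; exact hvu
    have heu : B e u = 0 := by simp [hudef, map_sub, map_smul, heu₂, hev']
    have hu₂v : B u₂ v = 1 := by rw [hsymm]; exact hvu₂
    have huu : B u u = 0 := by
      simp only [hudef, map_sub, map_smul, LinearMap.sub_apply, LinearMap.smul_apply,
        smul_eq_mul, hu₂v, hvu₂, hvv]
      ring
    set Sv : Submodule k V := Submodule.span k {v} with hSvdef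
    set Su : Submodule k V := Submodule.span k {u} with hSudef
    set S0 : Submodule k V := LinearMap.ker (B v) ⊓ LinearMap.ker (B u) with hS0def
    set W : ℤ → Submodule k V := gW Sv Su S0 with hWdef
    have hvSv : v ∈ Sv := Submodule.mem_span_singleton_self v
    have huSu : u ∈ Su := Submodule.mem_span_singleton_self u
    -- decomposition of an arbitrary vector
    have hdec : ∀ z : V, z - B v z • u - B u z • v ∈ S0 := by
      intro z
      refine ⟨?_, ?_⟩ <;>
        simp [LinearMap.mem_ker, map_sub, map_smul, hvu, hvv, huu, huv]
    -- orthogonality relations with the three pieces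
    have hSvmem : ∀ z ∈ Sv, ∃ a : k, z = a • v := by
      intro z hz
      obtain ⟨a, ha⟩ := Submodule.mem_span_singleton.1 hz
      exact ⟨a, ha.symm⟩
    have hSumem : ∀ z ∈ Su, ∃ a : k, z = a • u := by
      intro z hz
      obtain ⟨a, ha⟩ := Submodule.mem_span_singleton.1 hz
      exact ⟨a, ha.symm⟩
    -- B u · kills Su ⊔ S0 ; B v · kills Sv ⊔ S0
    have hBuS : ∀ z ∈ Su ⊔ S0, B u z = 0 := by
      intro z hz
      obtain ⟨y, hy, w, hw, rfl⟩ := Submodule.mem_sup.1 hz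
      obtain ⟨a, rfl⟩ := hSumem y hy
      have hw2 : B u w = 0 := hw.2
      simp [map_add, map_smul, huu, hw2]
    have hBvS : ∀ z ∈ Sv ⊔ S0, B v z = 0 := by
      intro z hz
      obtain ⟨y, hy, w, hw, rfl⟩ := Submodule.mem_sup.1 hz
      obtain ⟨a, rfl⟩ := hSvmem y hy
      have hw1 : B v w = 0 := hw.1
      simp [map_add, map_smul, hvv, hw1]
    have hdisj1 : Disjoint Sv (Su ⊔ S0) := by
      rw [Submodule.disjoint_def]
      intro z hz hz'
      obtain ⟨a, rfl⟩ := hSvmem z hz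
      have : B u (a • v) = 0 := hBuS _ hz'
      rw [map_smul, smul_eq_mul, huv, mul_one] at this
      simp [this]
    have hdisjm1 : Disjoint Su (Sv ⊔ S0) := by
      rw [Submodule.disjoint_def]
      intro z hz hz'
      obtain ⟨a, rfl⟩ := hSumem z hz
      have : B v (a • u) = 0 := hBvS _ hz'
      rw [map_smul, smul_eq_mul, hvu, mul_one] at this
      simp [this]
    have hdisj0 : Disjoint S0 (Sv ⊔ Su) := by
      rw [Submodule.disjoint_def]
      intro z hz hz'
      obtain ⟨y, hy, w, hw, rfl⟩ := Submodule.mem_sup.1 hz'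
      obtain ⟨a, rfl⟩ := hSvmem y hy
      obtain ⟨b, rfl⟩ := hSumem w hw
      have h1 : B v (a • v + b • u) = 0 := hz.1
      have h2 : B u (a • v + b • u) = 0 := hz.2
      rw [map_add, map_smul, map_smul, smul_eq_mul, smul_eq_mul, hvv, hvu,
        mul_zero, mul_one, zero_add] at h1
      rw [map_add, map_smul, map_smul, smul_eq_mul, smul_eq_mul, huv, huu,
        mul_one, mul_zero, add_zero] at h2
      simp [h1, h2]
    have hWle : ∀ j : ℤ, W j ≤ Sv ⊔ Su ⊔ S0 := by
      intro j
      by_cases h1 : j = 1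
      · subst h1; rw [hWdef, gW_one]; exact le_sup_of_le_left le_sup_left
      by_cases h2 : j = -1
      · subst h2; rw [hWdef, gW_neg_one]; exact le_sup_of_le_left le_sup_right
      by_cases h0 : j = 0
      · subst h0; rw [hWdef, gW_zero]; exact le_sup_right
      · rw [hWdef, gW_other _ _ _ h1 h2 h0]; exact bot_le
    have hindep : iSupIndep W := by
      rw [iSupIndep_def]
      intro i
      by_cases h1 : i = 1
      · subst h1
        rw [hWdef, gW_one]
        refine hdisj1.mono_right (iSup₂_le fun j hj => ?_)
        by_cases h2 : j = -1
        · subst h2; rw [gW_neg_one]; exact le_sup_left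
        by_cases h0 : j = 0
        · subst h0; rw [gW_zero]; exact le_sup_right
        · rw [gW_other _ _ _ hj h2 h0]; exact bot_le
      by_cases h2 : i = -1
      · subst h2
        rw [hWdef, gW_neg_one]
        refine hdisjm1.mono_right (iSup₂_le fun j hj => ?_)
        by_cases h1' : j = 1
        · subst h1'; rw [gW_one]; exact le_sup_left
        by_cases h0 : j = 0
        · subst h0; rw [gW_zero]; exact le_sup_right
        · rw [gW_other _ _ _ h1' hj h0]; exact bot_le
      by_cases h0 : i = 0
      · subst h0
        rw [hWdef, gW_zero]
        refine hdisj0.mono_right (iSup₂_le fun j hj => ?_)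
        by_cases h1' : j = 1
        · subst h1'; rw [gW_one]; exact le_sup_left
        by_cases h2' : j = -1
        · subst h2'; rw [gW_neg_one]; exact le_sup_right
        · rw [gW_other _ _ _ h1' h2' hj]; exact bot_le
      · rw [hWdef, gW_other _ _ _ h1 h2 h0]
        exact disjoint_bot_left
    have htop : ⨆ i, W i = ⊤ := by
      rw [eq_top_iff]
      intro z _
      have h1 : z - B v z • u - B u z • v ∈ W 0 := by rw [hWdef, gW_zero]; exact hdec z
      have h2 : B v z • u ∈ W (-1) := by
        rw [hWdef, gW_neg_one]; exact Submodule.smul_mem _ _ huSu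
      have h3 : B u z • v ∈ W 1 := by
        rw [hWdef, gW_one]; exact Submodule.smul_mem _ _ hvSv
      have : z = (z - B v z • u - B u z • v) + B v z • u + B u z • v := by abel
      rw [this]
      exact add_mem (add_mem (le_iSup W 0 h1) (le_iSup W (-1) h2)) (le_iSup W 1 h3)
    refine ⟨W, ?_, ?_, ?_, ?_, ?_, ?_⟩
    · exact (DirectSum.isInternal_submodule_iff_iSupIndep_and_iSup_eq_top W).2 ⟨hindep, htop⟩
    · refine Set.Finite.subset (Set.finite_Icc (-1 : ℤ) 1) ?_
      intro i hi
      simp only [Set.mem_setOf_eq] at hi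
      by_contra hmem
      simp only [Set.mem_Icc, not_and_or, not_le] at hmem
      have h1 : i ≠ 1 := by rcases hmem with h | h <;> omega
      have h2 : i ≠ -1 := by rcases hmem with h | h <;> omega
      have h0 : i ≠ 0 := by rcases hmem with h | h <;> omega
      exact hi (by rw [hWdef, gW_other _ _ _ h1 h2 h0])
    · intro i j hij z hz w hw
      by_cases hi1 : i = 1
      · subst hi1
        obtain ⟨a, rfl⟩ := hSvmem z hz
        by_cases hj1 : j = 1
        · subst hj1
          obtain ⟨b, rfl⟩ := hSvmem w hw
          simp [map_smul, hvv]
        by_cases hj0 : j = 0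
        · subst hj0
          have hw1 : B v w = 0 := hw.1
          simp [map_smul, hw1]
        · have hjm : j ≠ -1 := by omega
          rw [hWdef, gW_other _ _ _ hj1 hjm hj0] at hw
          simp only [Submodule.mem_bot] at hw
          simp [hw]
      by_cases him : i = -1
      · subst him
        obtain ⟨a, rfl⟩ := hSumem z hz
        by_cases hjm : j = -1
        · subst hjm
          obtain ⟨b, rfl⟩ := hSumem w hw
          simp [map_smul, huu]
        by_cases hj0 : j = 0
        · subst hj0
          have hw2 : B u w = 0 := hw.2
          simp [map_smul, hw2]
        · have hj1 : j ≠ 1 := by omega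
          rw [hWdef, gW_other _ _ _ hj1 hjm hj0] at hw
          simp only [Submodule.mem_bot] at hw
          simp [hw]
      by_cases hi0 : i = 0
      · subst hi0
        have hz1 : B v z = 0 := hz.1
        have hz2 : B u z = 0 := hz.2
        by_cases hj1 : j = 1
        · subst hj1
          obtain ⟨b, rfl⟩ := hSvmem w hw
          rw [map_smul, smul_eq_mul, hsymm z v, hz1, mul_zero]
        by_cases hjm : j = -1
        · subst hjm
          obtain ⟨b, rfl⟩ := hSumem w hw
          rw [map_smul, smul_eq_mul, hsymm z u, hz2, mul_zero]
        · have hj0 : j ≠ 0 := by omega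
          rw [hWdef, gW_other _ _ _ hj1 hjm hj0] at hw
          simp only [Submodule.mem_bot] at hw
          simp [hw]
      · rw [hWdef, gW_other _ _ _ hi1 him hi0] at hz
        simp only [Submodule.mem_bot] at hz
        simp [hz]
    · rw [hWdef, gW_zero]
      exact ⟨by simp [LinearMap.mem_ker, hve], by simp [LinearMap.mem_ker, hsymm u e, heu]⟩
    · refine ⟨1, one_ne_zero, ?_⟩
      rw [hWdef, gW_one]
      exact fun h => hv0 (by simpa [h] using hvSv)
    · intro i
      rcases le_or_gt i (-1) with hi | hi
      · -- everything is ≤ ⨆ j ≥ i, W j since the whole space is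
        refine le_trans le_top ?_
        rw [← htop]
        refine iSup_le fun j => ?_
        by_cases h1 : j = 1
        · subst h1; exact le_iSup₂ (f := fun j (_ : j ≥ i) => W j) 1 (by omega)
        by_cases h2 : j = -1
        · subst h2; exact le_iSup₂ (f := fun j (_ : j ≥ i) => W j) (-1) (by omega)
        by_cases h0 : j = 0
        · subst h0; exact le_iSup₂ (f := fun j (_ : j ≥ i) => W j) 0 (by omega)
        · rw [hWdef, gW_other _ _ _ h1 h2 h0]; exact bot_le
      rcases lt_trichotomy i 1 with hi' | hi' | hi'
      · -- i = 0
        have hi0 : i = 0 := by omega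
        subst hi0
        rintro z ⟨w, hw, rfl⟩
        rw [hWdef, gW_zero] at hw
        have hw1 : B v w = 0 := hw.1
        have hBvxw : B v (x w) = 0 := by
          have h1 : B (x v) w = - B v (x w) := hskew v w
          rw [hxv, map_smul, LinearMap.smul_apply, smul_eq_mul, hw1, mul_zero] at h1
          exact neg_eq_zero.1 h1.symm
        have hmem0 : x w - B u (x w) • v ∈ W 0 := by
          rw [hWdef, gW_zero]
          have := hdec (x w)
          rw [hBvxw, zero_smul, sub_zero] at this
          exact this
        have hmem1 : B u (x w) • v ∈ W 1 := by
          rw [hWdef, gW_one]; exact Submodule.smul_mem _ _ hvSv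
        have hz : (x : V →ₗ[k] V) w = (x w - B u (x w) • v) + B u (x w) • v := by abel
        rw [hz]
        exact add_mem
          (le_iSup₂ (f := fun j (_ : j ≥ (0:ℤ)) => W j) 0 le_rfl hmem0)
          (le_iSup₂ (f := fun j (_ : j ≥ (0:ℤ)) => W j) 1 (by omega) hmem1)
      · -- i = 1
        subst hi'
        rintro z ⟨w, hw, rfl⟩
        rw [hWdef, gW_one] at hw
        obtain ⟨a, rfl⟩ := hSvmem w hw
        have : (x : V →ₗ[k] V) (a • v) = (a * c) • v := by
          rw [map_smul, hxv, smul_smul]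
        rw [this]
        have hmem : (a * c) • v ∈ W 1 := by
          rw [hWdef, gW_one]; exact Submodule.smul_mem _ _ hvSv
        exact le_iSup₂ (f := fun j (_ : j ≥ (1:ℤ)) => W j) 1 le_rfl hmem
      · -- i ≥ 2
        have h1 : i ≠ 1 := by omega
        have h2 : i ≠ -1 := by omega
        have h0 : i ≠ 0 := by omega
        rw [hWdef, gW_other _ _ _ h1 h2 h0, Submodule.map_bot]
        exact bot_le
  · rintro ⟨W, hint, hfin, horth, heW, ⟨i0, hi0ne, hi0⟩, hx⟩
    have htop : ⨆ i, W i = ⊤ := hint.submodule_iSup_eq_top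
    have hpos : ∃ d : ℤ, 0 < d ∧ W d ≠ ⊥ := by
      rcases lt_trichotomy i0 0 with h | h | h
      · refine ⟨-i0, by omega, ?_⟩
        intro hbot
        obtain ⟨z, hz, hz0⟩ := Submodule.ne_bot_iff _ |>.1 hi0
        refine hz0 (hnd.1 z fun w => ?_)
        have hw : w ∈ ⨆ i, W i := htop ▸ Submodule.mem_top
        have hle : (⨆ i, W i) ≤ LinearMap.ker (B z) := by
          refine iSup_le fun j => fun y hy => ?_
          by_cases hij : i0 + j = 0
          · have hj : j = -i0 := by omega
            rw [hj, hbot, Submodule.mem_bot] at hy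
            simp [LinearMap.mem_ker, hy]
          · exact LinearMap.mem_ker.2 (horth i0 j hij z hz y hy)
        exact LinearMap.mem_ker.1 (hle hw)
      · exact absurd h hi0ne
      · exact ⟨i0, h, hi0⟩
    obtain ⟨d, hd, hWd⟩ := hpos
    set U : Submodule k V := ⨆ j ≥ d, W j with hUdef
    have hWdU : W d ≤ U := le_iSup₂ (f := fun j (_ : j ≥ d) => W j) d le_rfl
    have hUne : U ≠ ⊥ := fun h => hWd (le_bot_iff.1 (h ▸ hWdU))
    have hUorth : ∀ z ∈ U, ∀ w ∈ U, B z w = 0 := by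
      intro z hz w hw
      have h1 : ∀ j, d ≤ j → ∀ y ∈ W j, B y w = 0 := by
        intro j hj y hy
        have hle : U ≤ LinearMap.ker (B y) := by
          refine iSup₂_le fun l hl => fun w' hw' => ?_
          exact LinearMap.mem_ker.2 (horth j l (by omega) y hy w' hw')
        exact LinearMap.mem_ker.1 (hle hw)
      have hle : U ≤ LinearMap.ker (B.flip w) := by
        refine iSup₂_le fun j hj => fun y hy => ?_
        exact LinearMap.mem_ker.2 (by simpa using h1 j hj y hy)
      simpa using LinearMap.mem_ker.1 (hle hz)
    have heU : ∀ w ∈ U, B e w = 0 := by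
      intro w hw
      have hle : U ≤ LinearMap.ker (B e) := by
        refine iSup₂_le fun j hj => fun y hy => ?_
        exact LinearMap.mem_ker.2 (horth 0 j (by omega) e heW y hy)
      exact LinearMap.mem_ker.1 (hle hw)
    have hxU : ∀ z ∈ U, (x : V →ₗ[k] V) z ∈ U := by
      intro z hz
      have hle : U.map (x : V →ₗ[k] V) ≤ U := by
        rw [Submodule.map_le_iff_le_comap]
        refine iSup₂_le fun j hj => ?_
        rw [← Submodule.map_le_iff_le_comap]
        refine (hx j).trans (iSup₂_le fun l hl => ?_)
        exact le_iSup₂ (f := fun j (_ : j ≥ d) => W j) l (by omega)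
      exact hle ⟨z, hz, rfl⟩
    haveI : Nontrivial U := Submodule.nontrivial_iff_ne_bot.2 hUne
    obtain ⟨c, hc⟩ := Module.End.exists_eigenvalue
      ((x : V →ₗ[k] V).restrict hxU : Module.End k U)
    obtain ⟨v, hv⟩ := hc.exists_hasEigenvector
    have hxv : (x : V →ₗ[k] V) (v : V) = c • (v : V) := by
      have h1 : ((x : V →ₗ[k] V).restrict hxU) v = c • v := hv.apply_eq_smul
      have h2 : (((x : V →ₗ[k] V).restrict hxU) v : V) = (x : V →ₗ[k] V) (v : V) :=
        LinearMap.restrict_coe_apply _ _ _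
      rw [h1] at h2
      rw [← h2]
      rfl
    refine ⟨c, (v : V), ?_, ?_, ?_, hxv⟩
    · exact LinearMap.mem_ker.2 (by rw [hsymm]; rw [hsymm] at *; exact heU _ v.2)
    · exact fun h => hv.2 (Subtype.coe_injective (by simpa using h))
    · exact hUorth _ v.2 _ v.2
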